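/- Fix an integer t ≥ 1, let R_t(r) = Σ_{i=0}^t r^i/i!, and for y ∈ (0,t) let r_0(y) be the unique positive solution of r·R_t'(r)/R_t(r) = y. Then as y → t from below, the derivative of r_0 satisfies dr_0/dy = (r_0(y)^2/t)·(1 + O(1/r_0(y))); that is, (t/r_0(y)^2)·(dr_0/dy) − 1 = O(1/r_0(y)) as y ↑ t. -/

import Mathlib

open Filter Asymptotics Set

/-- `R_t(r) = Σ_{i=0}^t r^i / i!`. -/
noncomputable def Rt (t : ℕ) (r : ℝ) : ℝ :=
  ∑ i ∈ Finset.range (t + 1), r ^ i / (i.factorial : ℝ)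

/-- `F_t(r) = r · R_t'(r) / R_t(r)`. -/
noncomputable def Ft (t : ℕ) (r : ℝ) : ℝ := r * deriv (Rt t) r / Rt t r

namespace Stmt7

noncomputable def Q (t : ℕ) (r : ℝ) : ℝ := ∑ i ∈ Finset.range t, r ^ i / (i.factorial : ℝ)

noncomputable def Af (t : ℕ) (r : ℝ) : ℝ :=
  ∑ i ∈ Finset.range t, ((t:ℝ) - i) * r ^ i / (i.factorial : ℝ)
noncomputable def Bf (t : ℕ) (r : ℝ) : ℝ :=
  ∑ i ∈ Finset.range t, (((i:ℝ) - 1) * ((t:ℝ) - i)) * r ^ i / (i.factorial : ℝ)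
noncomputable def Cf (t : ℕ) (r : ℝ) : ℝ :=
  ∑ i ∈ Finset.range t, ((i:ℝ) * ((i:ℝ) - 2) * ((t:ℝ) - i + 1) - (t:ℝ) * ((t:ℝ) - 2)) * r ^ i
      / (i.factorial : ℝ)

lemma term_shift (c : ℝ) (i : ℕ) (r : ℝ) :
    ((i:ℝ)+1) * c * r ^ (i+1) / ((i+1).factorial : ℝ) = r * (c * r ^ i / (i.factorial : ℝ)) := by
  have h : (0:ℝ) < i.factorial := by exact_mod_cast i.factorial_pos
  rw [Nat.factorial_succ]
  push_cast
  rw [div_eq_iff (by positivity), pow_succ]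
  field_simp

lemma shift_sum (t : ℕ) (c g : ℕ → ℝ) (h0 : g 0 = 0)
    (hsucc : ∀ i, g (i+1) = ((i:ℝ)+1) * c i) (r : ℝ) :
    r * (∑ i ∈ Finset.range t, c i * r ^ i / (i.factorial : ℝ))
      = ∑ k ∈ Finset.range (t+1), g k * r ^ k / (k.factorial : ℝ) := by
  rw [Finset.sum_range_succ' (fun k => g k * r ^ k / (k.factorial : ℝ)) t, h0, Finset.mul_sum]
  simp only [pow_zero, mul_one, Nat.factorial_zero, Nat.cast_one, zero_mul, zero_div, add_zero]
  exact Finset.sum_congr rfl fun i _ => by rw [hsucc i, term_shift (c i) i r]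

lemma peel_top (t : ℕ) (g : ℕ → ℝ) (htop : g t = 0) (r : ℝ) :
    ∑ k ∈ Finset.range (t+1), g k * r ^ k / (k.factorial : ℝ)
      = ∑ k ∈ Finset.range t, g k * r ^ k / (k.factorial : ℝ) := by
  rw [Finset.sum_range_succ, htop, zero_mul, zero_div, add_zero]

lemma Rt_eq (t : ℕ) (r : ℝ) :
    Rt t r = ∑ i ∈ Finset.range (t+1), (1:ℝ) * r ^ i / (i.factorial : ℝ) := by
  rw [Rt]; exact Finset.sum_congr rfl fun i _ => by rw [one_mul]

lemma Q_eq (t : ℕ) (r : ℝ) :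
    Q t r = ∑ i ∈ Finset.range t, (1:ℝ) * r ^ i / (i.factorial : ℝ) := by
  rw [Q]; exact Finset.sum_congr rfl fun i _ => by rw [one_mul]

lemma iA (t : ℕ) (r : ℝ) :
    (t:ℝ) * Rt t r - r * Q t r = Af t r := by
  rw [Q_eq, shift_sum t (fun _ => (1:ℝ)) (fun k => (k:ℝ)) (by norm_num)
      (fun i => by push_cast; ring) r, Rt_eq, Finset.mul_sum, ← Finset.sum_sub_distrib]
  have : ∀ k ∈ Finset.range (t+1), (t:ℝ) * (1 * r ^ k / (k.factorial : ℝ))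
      - (k:ℝ) * r ^ k / (k.factorial : ℝ) = ((t:ℝ) - k) * r ^ k / (k.factorial : ℝ) := by
    intro k _; ring
  rw [Finset.sum_congr rfl this, peel_top t _ (by ring), Af]

lemma iB (t : ℕ) (r : ℝ) :
    r * Af t r - (t:ℝ) * Rt t r = Bf t r := by
  rw [Af, shift_sum t (fun i => ((t:ℝ) - i)) (fun k => (k:ℝ) * ((t:ℝ) - k + 1)) (by norm_num)
      (fun i => by push_cast; ring) r, Rt_eq, Finset.mul_sum, ← Finset.sum_sub_distrib]
  have : ∀ k ∈ Finset.range (t+1), (k:ℝ) * ((t:ℝ) - k + 1) * r ^ k / (k.factorial : ℝ)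
      - (t:ℝ) * (1 * r ^ k / (k.factorial : ℝ))
      = (((k:ℝ) - 1) * ((t:ℝ) - k)) * r ^ k / (k.factorial : ℝ) := by
    intro k _
    have h : (0:ℝ) < k.factorial := by exact_mod_cast k.factorial_pos
    field_simp; ring
  rw [Finset.sum_congr rfl this, peel_top t _ (by ring), Bf]

lemma iC (t : ℕ) (r : ℝ) :
    r * Bf t r - ((t:ℝ) * ((t:ℝ) - 2)) * Rt t r = Cf t r := by
  rw [Bf, shift_sum t (fun i => (((i:ℝ) - 1) * ((t:ℝ) - i)))
      (fun k => (k:ℝ) * ((k:ℝ) - 2) * ((t:ℝ) - k + 1)) (by norm_num)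
      (fun i => by push_cast; ring) r, Rt_eq, Finset.mul_sum, ← Finset.sum_sub_distrib]
  have : ∀ k ∈ Finset.range (t+1), (k:ℝ) * ((k:ℝ) - 2) * ((t:ℝ) - k + 1) * r ^ k
        / (k.factorial : ℝ) - (t:ℝ) * ((t:ℝ) - 2) * (1 * r ^ k / (k.factorial : ℝ))
      = ((k:ℝ) * ((k:ℝ) - 2) * ((t:ℝ) - k + 1) - (t:ℝ) * ((t:ℝ) - 2)) * r ^ k
        / (k.factorial : ℝ) := by
    intro k _
    have h : (0:ℝ) < k.factorial := by exact_mod_cast k.factorial_pos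
    field_simp
  rw [Finset.sum_congr rfl this, peel_top t _ (by ring), Cf]
-- seg2


lemma succ_term (i : ℕ) (r : ℝ) :
    ((i:ℝ)+1) * r ^ i / ((i+1).factorial : ℝ) = r ^ i / (i.factorial : ℝ) := by
  have h : (0:ℝ) < i.factorial := by exact_mod_cast i.factorial_pos
  rw [Nat.factorial_succ]
  push_cast
  rw [div_eq_div_iff (by positivity) (ne_of_gt h)]
  ring

lemma hasDerivAt_Rt (t : ℕ) (r : ℝ) : HasDerivAt (Rt t) (Q t r) r := by
  have h : HasDerivAt (fun x : ℝ => ∑ i ∈ Finset.range (t+1), x ^ i / (i.factorial : ℝ))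
      (∑ i ∈ Finset.range (t+1), (i:ℝ) * r ^ (i-1) / (i.factorial : ℝ)) r :=
    HasDerivAt.fun_sum (fun i _ => (hasDerivAt_pow i r).div_const _)
  have he : (∑ i ∈ Finset.range (t+1), (i:ℝ) * r ^ (i-1) / (i.factorial : ℝ)) = Q t r := by
    rw [Finset.sum_range_succ']
    simp only [Nat.cast_zero, Nat.add_sub_cancel, Nat.cast_add, Nat.cast_one]
    rw [Q]
    simp only [zero_mul, zero_div, add_zero]
    exact Finset.sum_congr rfl fun i _ => succ_term i r
  rw [← he]; exact h

lemma Ft_eq (t : ℕ) : Ft t = fun r => r * Q t r / Rt t r :=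
  funext fun r => by rw [Ft, (hasDerivAt_Rt t r).deriv]

/-- numerator of the derivative of `Ft (s+1)` -/
noncomputable def Dn (s : ℕ) (r : ℝ) : ℝ :=
  (Q (s+1) r + r * Q s r) * Rt (s+1) r - r * Q (s+1) r * Q (s+1) r

lemma hasDerivAt_Ft (s : ℕ) (r : ℝ) (hP : Rt (s+1) r ≠ 0) :
    HasDerivAt (Ft (s+1)) (Dn s r / (Rt (s+1) r)^2) r := by
  rw [Ft_eq]
  have hQ : HasDerivAt (Q (s+1)) (Q s r) r := hasDerivAt_Rt s r
  have hnum : HasDerivAt (fun x : ℝ => x * Q (s+1) x) (1 * Q (s+1) r + r * Q s r) r :=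
    (hasDerivAt_id r).mul hQ
  have := hnum.div (hasDerivAt_Rt (s+1) r) hP
  refine this.congr_deriv ?_
  rw [Dn]; ring

lemma rel1 (t : ℕ) (r : ℝ) : Rt t r = Q t r + r ^ t / (t.factorial : ℝ) := by
  rw [Rt, Finset.sum_range_succ, Q]

lemma rel2 (s : ℕ) (r : ℝ) :
    r * Q s r = r * Q (s+1) r - ((s:ℝ)+1) * (r ^ (s+1) / ((s+1).factorial : ℝ)) := by
  have h : Q (s+1) r = Q s r + r ^ s / (s.factorial : ℝ) := by
    rw [Q, Finset.sum_range_succ, Q]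
  rw [h]
  have h2 : ((s:ℝ)+1) * (r ^ (s+1) / ((s+1).factorial : ℝ)) = r * (r ^ s / (s.factorial : ℝ)) := by
    have := term_shift (1:ℝ) s r
    rw [one_mul, mul_one] at this
    rw [← this]; ring
  rw [h2]; ring

lemma S1 (t : ℕ) (r : ℝ) :
    ∑ k ∈ Finset.range (t+1), (k:ℝ) * r ^ k / (k.factorial : ℝ) = r * Q t r := by
  rw [Q_eq, shift_sum t (fun _ => (1:ℝ)) (fun k => (k:ℝ)) (by norm_num)
      (fun i => by push_cast; ring) r]

lemma S2 (s : ℕ) (r : ℝ) :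
    ∑ k ∈ Finset.range (s+2), (k:ℝ)^2 * r ^ k / (k.factorial : ℝ)
      = r * Q (s+1) r + r^2 * Q s r := by
  have h1 := shift_sum (s+1) (fun i => ((i:ℝ)+1)) (fun k => (k:ℝ)^2) (by norm_num)
      (fun i => by push_cast; ring) r
  have h2 : ∑ i ∈ Finset.range (s+1), ((i:ℝ)+1) * r ^ i / (i.factorial : ℝ)
      = Q (s+1) r + r * Q s r := by
    rw [← S1 s r, Q_eq, ← Finset.sum_add_distrib]
    exact Finset.sum_congr rfl fun i _ => by ring
  calc ∑ k ∈ Finset.range (s+2), (k:ℝ)^2 * r ^ k / (k.factorial : ℝ)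
      = r * (∑ i ∈ Finset.range (s+1), ((i:ℝ)+1) * r ^ i / (i.factorial : ℝ)) := h1.symm
    _ = r * (Q (s+1) r + r * Q s r) := by rw [h2]
    _ = r * Q (s+1) r + r^2 * Q s r := by ring


-- seg3
lemma var_ident (n : ℕ) (x : ℕ → ℝ) :
    2 * ((∑ i ∈ Finset.range n, (i:ℝ)^2 * x i) * (∑ i ∈ Finset.range n, x i)
      - (∑ i ∈ Finset.range n, (i:ℝ) * x i)^2)
    = ∑ i ∈ Finset.range n, ∑ j ∈ Finset.range n, ((i:ℝ)-(j:ℝ))^2 * (x i * x j) := by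
  set X := ∑ i ∈ Finset.range n, x i with hX
  set Y := ∑ i ∈ Finset.range n, (i:ℝ) * x i with hY
  set Z := ∑ i ∈ Finset.range n, (i:ℝ)^2 * x i with hZ
  have inner : ∀ i ∈ Finset.range n,
      ∑ j ∈ Finset.range n, ((i:ℝ)-(j:ℝ))^2 * (x i * x j)
        = (i:ℝ)^2 * x i * X + x i * Z - 2 * ((i:ℝ) * x i) * Y := by
    intro i _
    rw [hX, hY, hZ, Finset.mul_sum, Finset.mul_sum, Finset.mul_sum, ← Finset.sum_add_distrib,
      ← Finset.sum_sub_distrib]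
    exact Finset.sum_congr rfl fun j _ => by ring
  rw [Finset.sum_congr rfl inner, Finset.sum_sub_distrib, Finset.sum_add_distrib,
    ← Finset.sum_mul, ← Finset.sum_mul, ← Finset.sum_mul, ← Finset.mul_sum, ← hX, ← hY, ← hZ]
  ring

lemma var_pos (s : ℕ) (x : ℕ → ℝ) (hx : ∀ i, 0 ≤ x i) (hx0 : 0 < x 0) (hxt : 0 < x (s+1)) :
    0 < (∑ i ∈ Finset.range (s+2), (i:ℝ)^2 * x i) * (∑ i ∈ Finset.range (s+2), x i)
      - (∑ i ∈ Finset.range (s+2), (i:ℝ) * x i)^2 := by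
  have h2 : 0 < 2 * ((∑ i ∈ Finset.range (s+2), (i:ℝ)^2 * x i) * (∑ i ∈ Finset.range (s+2), x i)
      - (∑ i ∈ Finset.range (s+2), (i:ℝ) * x i)^2) := by
    rw [var_ident]
    apply Finset.sum_pos'
    · intro i _
      apply Finset.sum_nonneg
      intro j _
      have := hx i; have := hx j
      positivity
    · refine ⟨s+1, Finset.self_mem_range_succ (s+1), ?_⟩
      apply Finset.sum_pos'
      · intro j _
        have := hx j
        positivity
      · refine ⟨0, Finset.mem_range.2 (by omega), ?_⟩
        have hc : (0:ℝ) < ((s:ℝ)+1) := by positivity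
        calc (0:ℝ) < ((s:ℝ)+1)^2 * (x (s+1) * x 0) := by push_cast; positivity
          _ = ((((s+1):ℕ):ℝ) - ((0:ℕ):ℝ))^2 * (x (s+1) * x 0) := by push_cast; ring
  linarith

lemma Dn_pos (s : ℕ) (r : ℝ) (hr : 0 < r) : 0 < Dn s r := by
  set x : ℕ → ℝ := fun i => r ^ i / (i.factorial : ℝ) with hxdef
  have hx : ∀ i, 0 ≤ x i := fun i => by
    have h : (0:ℝ) < i.factorial := by exact_mod_cast i.factorial_pos
    positivity
  have hx0 : 0 < x 0 := by norm_num [hxdef]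
  have hxt : 0 < x (s+1) := by
    have h : (0:ℝ) < (s+1).factorial := by exact_mod_cast (s+1).factorial_pos
    simp only [hxdef]
    positivity
  have hv := var_pos s x hx hx0 hxt
  have e0 : ∑ i ∈ Finset.range (s+2), x i = Rt (s+1) r := by rw [Rt]
  have e1 : ∑ i ∈ Finset.range (s+2), (i:ℝ) * x i = r * Q (s+1) r := by
    rw [← S1 (s+1) r]
    exact Finset.sum_congr rfl fun i _ => by rw [hxdef, mul_div_assoc]
  have e2 : ∑ i ∈ Finset.range (s+2), (i:ℝ)^2 * x i = r * Q (s+1) r + r^2 * Q s r := by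
    rw [← S2 s r]
    exact Finset.sum_congr rfl fun i _ => by rw [hxdef, mul_div_assoc]
  rw [e0, e1, e2] at hv
  have : 0 < r * Dn s r := by rw [Dn]; nlinarith [hv]
  nlinarith [this, hr]
-- seg4
lemma Rt_ge_pow (t : ℕ) (r : ℝ) (hr : 0 ≤ r) :
    r ^ t / (t.factorial : ℝ) ≤ Rt t r := by
  rw [Rt]
  exact Finset.single_le_sum (f := fun i => r ^ i / (i.factorial : ℝ))
    (fun i _ => by
      have h : (0:ℝ) < i.factorial := by exact_mod_cast i.factorial_pos
      positivity)
    (Finset.self_mem_range_succ t)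

lemma one_le_Rt (t : ℕ) (r : ℝ) (hr : 0 ≤ r) : 1 ≤ Rt t r := by
  have h := Finset.single_le_sum (f := fun i => r ^ i / (i.factorial : ℝ))
    (fun i _ => by
      have h : (0:ℝ) < i.factorial := by exact_mod_cast i.factorial_pos
      positivity)
    (Finset.mem_range.2 (Nat.succ_pos t))
  simpa [Rt] using h

lemma Rt_pos (t : ℕ) (r : ℝ) (hr : 0 ≤ r) : 0 < Rt t r :=
  lt_of_lt_of_le one_pos (one_le_Rt t r hr)

lemma one_le_Q (s : ℕ) (r : ℝ) (hr : 0 ≤ r) : 1 ≤ Q (s+1) r := one_le_Rt s r hr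

lemma Af_pos (s : ℕ) (r : ℝ) (hr : 0 < r) : 0 < Af (s+1) r := by
  rw [Af]
  apply Finset.sum_pos
  · intro i hi
    have hi' : i < s+1 := Finset.mem_range.1 hi
    have h1 : (i:ℝ) < ((s:ℕ):ℝ) + 1 := by exact_mod_cast hi'
    have h : (0:ℝ) < i.factorial := by exact_mod_cast i.factorial_pos
    have h2 : (0:ℝ) < ((s+1:ℕ):ℝ) - i := by push_cast; push_cast at h1; linarith
    positivity
  · exact ⟨0, Finset.mem_range.2 (Nat.succ_pos s)⟩

lemma keyId (s : ℕ) (r : ℝ) :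
    ((s:ℝ)+1) * (Rt (s+1) r)^2 - r^2 * Dn s r
      = (Cf (s+1) r + ((s:ℝ)+1) * Af (s+1) r + (1-((s:ℝ)+1)) * Bf (s+1) r) * Rt (s+1) r
        + Af (s+1) r * Bf (s+1) r := by
  have hA : Af (s+1) r = ((s:ℝ)+1) * Rt (s+1) r - r * Q (s+1) r := by
    have := iA (s+1) r; push_cast at this ⊢; linear_combination -this
  have hB : Bf (s+1) r = r * Af (s+1) r - ((s:ℝ)+1) * Rt (s+1) r := by
    have := iB (s+1) r; push_cast at this ⊢; linear_combination -this
  have hC : Cf (s+1) r = r * Bf (s+1) r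
      - (((s:ℝ)+1) * (((s:ℝ)+1) - 2)) * Rt (s+1) r := by
    have := iC (s+1) r; push_cast at this ⊢; linear_combination -this
  have hq1 : Q (s+1) r = Rt (s+1) r - r^(s+1)/(((s+1).factorial : ℝ)) := by
    have := rel1 (s+1) r; linarith
  have hq2 := rel2 s r
  rw [hC, hB, hA, Dn, hq2, hq1]
  push_cast
  ring

lemma sum_bound (t : ℕ) (c : ℕ → ℝ) (r : ℝ) (hr : 1 ≤ r) :
    |∑ i ∈ Finset.range t, c i * r ^ i / (i.factorial : ℝ)|
      ≤ (∑ i ∈ Finset.range t, |c i|) * r ^ (t-1) := by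
  have hr0 : (0:ℝ) ≤ r := le_trans zero_le_one hr
  calc |∑ i ∈ Finset.range t, c i * r ^ i / (i.factorial : ℝ)|
      ≤ ∑ i ∈ Finset.range t, |c i * r ^ i / (i.factorial : ℝ)| :=
        Finset.abs_sum_le_sum_abs _ _
    _ ≤ ∑ i ∈ Finset.range t, |c i| * r ^ (t-1) := by
        apply Finset.sum_le_sum
        intro i hi
        have hi' : i ≤ t - 1 := by have := Finset.mem_range.1 hi; omega
        have hfac : (1:ℝ) ≤ i.factorial := by exact_mod_cast i.factorial_pos
        have e : |c i * r ^ i / (i.factorial : ℝ)| = |c i| * (r ^ i / (i.factorial : ℝ)) := by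
          rw [abs_div, abs_mul, abs_of_nonneg (pow_nonneg hr0 i),
            abs_of_pos (by linarith : (0:ℝ) < i.factorial), mul_div_assoc]
        rw [e]
        apply mul_le_mul_of_nonneg_left _ (abs_nonneg _)
        calc r ^ i / (i.factorial : ℝ) ≤ r ^ i := by
              apply div_le_self (pow_nonneg hr0 i) hfac
          _ ≤ r ^ (t-1) := pow_le_pow_right₀ hr hi'
    _ = (∑ i ∈ Finset.range t, |c i|) * r ^ (t-1) := (Finset.sum_mul _ _ _).symm

lemma boundA (s : ℕ) : ∃ K : ℝ, 0 ≤ K ∧ ∀ r : ℝ, 1 ≤ r → |Af (s+1) r| ≤ K * r ^ s := by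
  refine ⟨∑ i ∈ Finset.range (s+1), |((s+1:ℕ):ℝ) - i|,
    Finset.sum_nonneg fun i _ => abs_nonneg _, fun r hr => ?_⟩
  have := sum_bound (s+1) (fun i => ((s+1:ℕ):ℝ) - i) r hr
  simpa [Af] using this

lemma boundB (s : ℕ) : ∃ K : ℝ, 0 ≤ K ∧ ∀ r : ℝ, 1 ≤ r → |Bf (s+1) r| ≤ K * r ^ s := by
  refine ⟨∑ i ∈ Finset.range (s+1), |((i:ℝ) - 1) * (((s+1:ℕ):ℝ) - i)|,
    Finset.sum_nonneg fun i _ => abs_nonneg _, fun r hr => ?_⟩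
  have := sum_bound (s+1) (fun i => ((i:ℝ) - 1) * (((s+1:ℕ):ℝ) - i)) r hr
  simpa [Bf] using this

lemma boundC (s : ℕ) : ∃ K : ℝ, 0 ≤ K ∧ ∀ r : ℝ, 1 ≤ r → |Cf (s+1) r| ≤ K * r ^ s := by
  refine ⟨∑ i ∈ Finset.range (s+1),
      |(i:ℝ) * ((i:ℝ) - 2) * (((s+1:ℕ):ℝ) - i + 1) - ((s+1:ℕ):ℝ) * (((s+1:ℕ):ℝ) - 2)|,
    Finset.sum_nonneg fun i _ => abs_nonneg _, fun r hr => ?_⟩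
  have := sum_bound (s+1)
    (fun i => (i:ℝ) * ((i:ℝ) - 2) * (((s+1:ℕ):ℝ) - i + 1) - ((s+1:ℕ):ℝ) * (((s+1:ℕ):ℝ) - 2))
    r hr
  simpa [Cf] using this
-- seg5
lemma core (t' fac KA KB KC P D rs r : ℝ)
    (ht'0 : 0 < t') (hfac1 : 1 ≤ fac) (hKA0 : 0 ≤ KA) (hKB0 : 0 ≤ KB) (hKC0 : 0 ≤ KC)
    (hP0 : 0 < P) (hD0 : 0 < D) (hr1 : 1 ≤ r) (hrs0 : 0 < rs)
    (hfp : rs * r ≤ fac * P)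
    (hrK : 2 * ((KC + t'*KA + t'*KB)*fac + KA*KB*fac^2 + 1) / t' ≤ r)
    (habs : |t' * P^2 - r^2 * D| ≤ (KC + t'*KA + t'*KB) * rs * P + KA*KB*rs^2) :
    |t' / r^2 * (D / P^2)⁻¹ - 1|
      ≤ 2 * ((KC + t'*KA + t'*KB)*fac + KA*KB*fac^2 + 1) / t' * (1/r) := by
  have hfac0 : (0:ℝ) < fac := lt_of_lt_of_le one_pos hfac1
  have hr0 : (0:ℝ) < r := lt_of_lt_of_le one_pos hr1
  set c1 : ℝ := KC + t'*KA + t'*KB with hc1d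
  have hc10 : 0 ≤ c1 := by positivity
  set K1 : ℝ := c1 * fac + KA*KB*fac^2 + 1 with hK1d
  have hK10 : (1:ℝ) ≤ K1 := by
    have e1 : 0 ≤ c1 * fac := mul_nonneg hc10 (le_of_lt hfac0)
    have e2 : 0 ≤ KA * KB * fac^2 := by positivity
    rw [hK1d]; linarith
  have hnum : |t' * P^2 - r^2 * D| * r ≤ K1 * P^2 := by
    have piece1 : c1 * rs * P * r ≤ c1 * fac * P^2 := by
      have h1 := mul_le_mul_of_nonneg_left hfp (mul_nonneg hc10 (le_of_lt hP0))
      linarith [h1]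
    have hr2 : r ≤ r^2 := by nlinarith
    have piece2 : KA * KB * rs^2 * r ≤ KA * KB * fac^2 * P^2 := by
      have hsq : (rs * r)^2 ≤ (fac * P)^2 := pow_le_pow_left₀ (by positivity) hfp 2
      have h2 : rs^2 * r ≤ rs^2 * r^2 := mul_le_mul_of_nonneg_left hr2 (by positivity)
      have h3 : rs^2 * r ≤ fac^2 * P^2 := by linarith [hsq, h2]
      have h4 := mul_le_mul_of_nonneg_left h3 (mul_nonneg hKA0 hKB0)
      linarith [h4]
    have h9 := mul_le_mul_of_nonneg_right habs (le_of_lt hr0)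
    have h11 : K1 * P^2 = c1 * fac * P^2 + KA * KB * fac^2 * P^2 + P^2 := by
      rw [hK1d]; ring
    calc |t' * P^2 - r^2 * D| * r ≤ (c1 * rs * P + KA*KB*rs^2) * r := h9
      _ = c1 * rs * P * r + KA * KB * rs^2 * r := by ring
      _ ≤ c1 * fac * P^2 + KA * KB * fac^2 * P^2 := by linarith [piece1, piece2]
      _ ≤ K1 * P^2 := by rw [h11]; linarith [sq_nonneg P]
  have he : t' - r^2 * (D / P^2) = (t' * P^2 - r^2 * D) / P^2 := by
    field_simp
  have hT : |t' - r^2 * (D / P^2)| ≤ K1 / r := by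
    rw [he, abs_div, abs_of_pos (by positivity : (0:ℝ) < P^2),
      div_le_div_iff₀ (by positivity) hr0]
    exact hnum
  set X : ℝ := r^2 * (D / P^2) with hXd
  have hX0 : 0 < X := by rw [hXd]; positivity
  have hK1r : K1 / r ≤ t' / 2 := by
    rw [div_le_div_iff₀ hr0 (by norm_num : (0:ℝ) < 2)]
    rw [div_le_iff₀ ht'0] at hrK
    linarith
  have hXge : t' / 2 ≤ X := by
    have h7 : t' - X ≤ |t' - X| := le_abs_self _
    have h8 : |t' - X| ≤ t'/2 := le_trans hT hK1r
    linarith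
  have hexp : t' / r^2 * (D / P^2)⁻¹ = t' / X := by
    rw [hXd, ← div_eq_mul_inv, div_div]
  rw [hexp, div_sub_one hX0.ne', abs_div, abs_of_pos hX0]
  calc |t' - X| / X ≤ (K1 / r) / (t' / 2) :=
      div_le_div₀ (by positivity) hT (by positivity) hXge
    _ = 2 * K1 / t' * (1 / r) := by field_simp

lemma main_est (s : ℕ) : ∃ K R₀ : ℝ, 0 ≤ K ∧ 1 ≤ R₀ ∧ ∀ r : ℝ, R₀ ≤ r →
    0 < deriv (Ft (s+1)) r ∧
    |((s:ℝ)+1) / r^2 * (deriv (Ft (s+1)) r)⁻¹ - 1| ≤ K * (1 / r) := by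
  obtain ⟨KA, hKA0, hKA⟩ := boundA s
  obtain ⟨KB, hKB0, hKB⟩ := boundB s
  obtain ⟨KC, hKC0, hKC⟩ := boundC s
  have ht'0 : (0:ℝ) < (s:ℝ) + 1 := by positivity
  have hfac1 : (1:ℝ) ≤ ((s+1).factorial : ℝ) := by exact_mod_cast (s+1).factorial_pos
  have hfac0 : (0:ℝ) < ((s+1).factorial : ℝ) := lt_of_lt_of_le one_pos hfac1
  set t' : ℝ := (s:ℝ) + 1 with ht'
  set fac : ℝ := ((s+1).factorial : ℝ) with hfacd
  set K : ℝ := 2 * ((KC + t'*KA + t'*KB)*fac + KA*KB*fac^2 + 1) / t' with hKd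
  have hK0 : 0 ≤ K := by positivity
  refine ⟨K, max 1 K, hK0, le_max_left _ _, fun r hr => ?_⟩
  have hr1 : (1:ℝ) ≤ r := le_trans (le_max_left _ _) hr
  have hrK : K ≤ r := le_trans (le_max_right _ _) hr
  have hr0 : (0:ℝ) < r := lt_of_lt_of_le one_pos hr1
  have hPl : r ^ (s+1) / fac ≤ Rt (s+1) r := Rt_ge_pow (s+1) r (le_of_lt hr0)
  have hP0 : 0 < Rt (s+1) r :=
    lt_of_lt_of_le (by positivity) hPl
  have hderiv : deriv (Ft (s+1)) r = Dn s r / (Rt (s+1) r)^2 :=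
    (hasDerivAt_Ft s r hP0.ne').deriv
  have hDn : 0 < Dn s r := Dn_pos s r hr0
  have hrs0 : (0:ℝ) < r^s := by positivity
  have hfp : r^s * r ≤ fac * Rt (s+1) r := by
    have h0 : r^(s+1) ≤ Rt (s+1) r * fac := by rw [div_le_iff₀ hfac0] at hPl; linarith
    calc r^s * r = r^(s+1) := by ring
      _ ≤ fac * Rt (s+1) r := by linarith
  -- bound on the numerator
  have habs : |t' * (Rt (s+1) r)^2 - r^2 * Dn s r|
      ≤ (KC + t'*KA + t'*KB) * r^s * Rt (s+1) r + KA*KB*(r^s)^2 := by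
    have hk := keyId s r
    rw [hk]
    have h1 : |Cf (s+1) r + t' * Af (s+1) r + (1 - t') * Bf (s+1) r|
        ≤ (KC + t'*KA + t'*KB) * r^s := by
      have e1 : |1 - t'| ≤ t' := by
        rw [ht', abs_of_nonpos (by push_cast; linarith)]; push_cast; linarith
      calc |Cf (s+1) r + t' * Af (s+1) r + (1 - t') * Bf (s+1) r|
          ≤ |Cf (s+1) r| + |t' * Af (s+1) r| + |(1 - t') * Bf (s+1) r| := abs_add_three _ _ _
        _ ≤ KC * r^s + t' * (KA * r^s) + t' * (KB * r^s) := by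
            rw [abs_mul, abs_mul, abs_of_pos ht'0]
            have h2 : |1 - t'| * |Bf (s+1) r| ≤ t' * (KB * r^s) :=
              mul_le_mul e1 (hKB r hr1) (abs_nonneg _) (le_of_lt ht'0)
            have h3 : t' * |Af (s+1) r| ≤ t' * (KA * r^s) :=
              mul_le_mul_of_nonneg_left (hKA r hr1) (le_of_lt ht'0)
            have h4 := hKC r hr1
            linarith
        _ = (KC + t'*KA + t'*KB) * r^s := by ring
    calc |(Cf (s+1) r + t' * Af (s+1) r + (1 - t') * Bf (s+1) r) * Rt (s+1) r
            + Af (s+1) r * Bf (s+1) r|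
        ≤ |(Cf (s+1) r + t' * Af (s+1) r + (1 - t') * Bf (s+1) r) * Rt (s+1) r|
            + |Af (s+1) r * Bf (s+1) r| := abs_add_le _ _
      _ ≤ (KC + t'*KA + t'*KB) * r^s * Rt (s+1) r + KA*KB*(r^s)^2 := by
          rw [abs_mul, abs_mul, abs_of_pos hP0]
          have h5 : |Af (s+1) r| * |Bf (s+1) r| ≤ (KA * r^s) * (KB * r^s) :=
            mul_le_mul (hKA r hr1) (hKB r hr1) (abs_nonneg _) (by positivity)
          have h6 : |Cf (s+1) r + t' * Af (s+1) r + (1 - t') * Bf (s+1) r| * Rt (s+1) r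
              ≤ (KC + t'*KA + t'*KB) * r^s * Rt (s+1) r :=
            mul_le_mul_of_nonneg_right h1 (le_of_lt hP0)
          nlinarith [h5, h6]
  refine ⟨by rw [hderiv]; positivity, ?_⟩
  rw [hderiv]
  exact core t' fac KA KB KC (Rt (s+1) r) (Dn s r) (r^s) r ht'0 hfac1 hKA0 hKB0 hKC0
    hP0 hDn hr1 hrs0 hfp (by rw [hKd] at hrK; exact hrK) habs
-- seg6
lemma cont_Q (t : ℕ) : Continuous (Q t) := by
  unfold Q
  exact continuous_finset_sum _ (fun i _ => (continuous_pow i).div_const _)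

lemma cont_Rt (t : ℕ) : Continuous (Rt t) := by
  unfold Rt
  exact continuous_finset_sum _ (fun i _ => (continuous_pow i).div_const _)

lemma Ft_pos (s : ℕ) (r : ℝ) (hr : 0 < r) : 0 < Ft (s+1) r := by
  rw [Ft_eq]
  exact div_pos (mul_pos hr (lt_of_lt_of_le one_pos (one_le_Q s r hr.le)))
    (Rt_pos (s+1) r hr.le)

lemma Ft_lt_top (s : ℕ) (r : ℝ) (hr : 0 < r) : Ft (s+1) r < (s:ℝ)+1 := by
  have hP0 := Rt_pos (s+1) r hr.le
  have hA := Af_pos s r hr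
  have hiA := iA (s+1) r
  push_cast at hiA
  rw [Ft_eq]
  rw [div_lt_iff₀ hP0]
  linarith

lemma strictMono_Ft (s : ℕ) : StrictMonoOn (Ft (s+1)) (Ici 0) := by
  apply strictMonoOn_of_deriv_pos (convex_Ici 0)
  · rw [Ft_eq]
    exact ((continuous_id.mul (cont_Q (s+1))).continuousOn).div
      (cont_Rt (s+1)).continuousOn (fun x hx => (Rt_pos (s+1) x hx).ne')
  · intro x hx
    rw [interior_Ici] at hx
    have hP0 := Rt_pos (s+1) x (le_of_lt hx)
    rw [(hasDerivAt_Ft s x hP0.ne').deriv]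
    exact div_pos (Dn_pos s x hx) (by positivity)

end Stmt7

open Stmt7 in
theorem stmt7 (t : ℕ) (ht : 1 ≤ t) (r0 : ℝ → ℝ)
    (hr0 : ∀ y ∈ Set.Ioo (0 : ℝ) t, 0 < r0 y ∧ Ft t (r0 y) = y) :
    (fun y : ℝ => (t : ℝ) / (r0 y) ^ 2 * deriv r0 y - 1)
      =O[nhdsWithin (t : ℝ) (Set.Iio (t : ℝ))] (fun y : ℝ => 1 / r0 y) := by
  obtain ⟨s, rfl⟩ : ∃ s, t = s + 1 := ⟨t - 1, by omega⟩
  set T : ℝ := ((s+1 : ℕ) : ℝ) with hTd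
  have hT : T = (s:ℝ) + 1 := by rw [hTd]; push_cast; ring
  have hT0 : (0:ℝ) < T := by rw [hT]; positivity
  have hmono := strictMono_Ft s
  -- r0 is continuous at each point of Ioo 0 T
  have hcont : ∀ y ∈ Set.Ioo (0:ℝ) T, ContinuousAt r0 y := by
    intro y hy
    obtain ⟨ha0, hFa⟩ := hr0 y hy
    have htd : Tendsto r0 (nhds y) (nhds (r0 y)) := by
      rw [Metric.tendsto_nhds]
      intro ε hε
      set a := r0 y with had
      set ε' : ℝ := min (ε/2) (a/2) with hε'd
      have hε'0 : 0 < ε' := lt_min (by linarith) (by linarith)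
      have hε'a : ε' ≤ a/2 := min_le_right _ _
      have hε'ε : ε' < ε := lt_of_le_of_lt (min_le_left _ _) (by linarith)
      have h1 : 0 < a - ε' := by linarith
      have hlo : Ft (s+1) (a - ε') < y := by
        rw [← hFa]
        exact hmono (le_of_lt h1) (le_of_lt ha0) (by linarith)
      have hhi : y < Ft (s+1) (a + ε') := by
        rw [← hFa]
        exact hmono (le_of_lt ha0) (Set.mem_Ici.2 (by linarith)) (by linarith)
      have hU : Ioo (Ft (s+1) (a-ε')) (Ft (s+1) (a+ε')) ∩ Ioo 0 T ∈ nhds y :=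
        (IsOpen.inter isOpen_Ioo isOpen_Ioo).mem_nhds ⟨⟨hlo, hhi⟩, hy⟩
      filter_upwards [hU] with z hz
      obtain ⟨⟨hz1, hz2⟩, hz3⟩ := hz
      obtain ⟨hz0, hFz⟩ := hr0 z hz3
      have hgt : a - ε' < r0 z := by
        by_contra h
        push_neg at h
        have hle := (hmono.le_iff_le (le_of_lt hz0) (le_of_lt h1)).2 h
        rw [hFz] at hle
        linarith
      have hlt : r0 z < a + ε' := by
        by_contra h
        push_neg at h
        have hle := (hmono.le_iff_le (by linarith : (0:ℝ) ≤ a + ε') (le_of_lt hz0)).2 h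
        rw [hFz] at hle
        linarith
      rw [Real.dist_eq, abs_sub_lt_iff]
      constructor <;> linarith
    exact htd
  -- derivative of r0
  have hderiv_r0 : ∀ y ∈ Set.Ioo (0:ℝ) T, HasDerivAt r0 (deriv (Ft (s+1)) (r0 y))⁻¹ y := by
    intro y hy
    obtain ⟨ha0, hFa⟩ := hr0 y hy
    have hP0 := Rt_pos (s+1) (r0 y) ha0.le
    have hF' := hasDerivAt_Ft s (r0 y) hP0.ne'
    have hpos : 0 < deriv (Ft (s+1)) (r0 y) := by
      rw [hF'.deriv]
      exact div_pos (Dn_pos s _ ha0) (by positivity)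
    have hd : HasDerivAt (Ft (s+1)) (deriv (Ft (s+1)) (r0 y)) (r0 y) := by
      rw [hF'.deriv]; exact hF'
    have hfg : ∀ᶠ z in nhds y, Ft (s+1) (r0 z) = z := by
      filter_upwards [isOpen_Ioo.mem_nhds hy] with z hz
      exact (hr0 z hz).2
    exact HasDerivAt.of_local_left_inverse (hcont y hy) hd hpos.ne' hfg
  -- r0 tends to infinity
  have htend : Tendsto r0 (nhdsWithin T (Set.Iio T)) atTop := by
    rw [tendsto_atTop]
    intro M
    set M' : ℝ := max M 1 with hM'd
    have hM'0 : (0:ℝ) < M' := lt_of_lt_of_le one_pos (le_max_right _ _)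
    have hc : Ft (s+1) M' < T := by rw [hT]; exact Ft_lt_top s M' hM'0
    have hc0 := Ft_pos s M' hM'0
    have hV : Ioo (Ft (s+1) M') T ∈ nhdsWithin T (Set.Iio T) :=
      Ioo_mem_nhdsLT_of_mem ⟨hc, le_refl T⟩
    filter_upwards [hV] with y hy
    have hyIoo : y ∈ Set.Ioo (0:ℝ) T := ⟨lt_trans hc0 hy.1, hy.2⟩
    obtain ⟨hy0, hFy⟩ := hr0 y hyIoo
    have hgt : M' < r0 y := by
      by_contra h
      push_neg at h
      have hle := (hmono.le_iff_le (le_of_lt hy0) (le_of_lt hM'0)).2 h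
      rw [hFy] at hle
      linarith [hy.1]
    linarith [le_max_left M 1]
  -- assemble
  obtain ⟨K, R₀, hK0, hR₀1, hest⟩ := main_est s
  rw [isBigO_iff]
  refine ⟨K, ?_⟩
  have hev1 : ∀ᶠ y in nhdsWithin T (Set.Iio T), y ∈ Set.Ioo (0:ℝ) T := by
    filter_upwards [Ioo_mem_nhdsLT_of_mem (⟨hT0, le_refl T⟩ : T ∈ Set.Ioc (0:ℝ) T)] with y hy
    exact hy
  have hev2 : ∀ᶠ y in nhdsWithin T (Set.Iio T), R₀ ≤ r0 y :=
    htend.eventually (eventually_ge_atTop R₀)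
  filter_upwards [hev1, hev2] with y hy hRy
  obtain ⟨ha0, hFa⟩ := hr0 y hy
  have hd := hderiv_r0 y hy
  obtain ⟨hdpos, hbound⟩ := hest (r0 y) hRy
  rw [hd.deriv, Real.norm_eq_abs, Real.norm_eq_abs]
  have h1a : (1:ℝ) ≤ r0 y := le_trans hR₀1 hRy
  have habs1 : |1 / r0 y| = 1 / r0 y := abs_of_pos (by positivity)
  rw [habs1]
  rw [hT]
  exact hbound
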